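/- arXiv:2412.15408 — 3 statements merged into one kernel-verified Lean document; each statement's English description precedes it below -/
import Mathlib

section
/- For every natural number n ≥ 1, the integer translates of the centered cardinal B-spline form a partition of unity: for every x ∈ ℝ, the sum over all j ∈ ℤ of φ_n(x − j) equals 1 (the sum has only finitely many nonzero terms since φ_n is compactly supported). -/
open MeasureTheory

/-- The centered cardinal B-spline: `bspline 0` is the indicator of `(-1/2, 1/2)`,
and `bspline (n+1) x = ∫_{-1/2}^{1/2} bspline n (x - y) dy`. -/
noncomputable def bspline : ℕ → ℝ → ℝ
  | 0 => Set.indicator (Set.Ioo (-(1/2) : ℝ) (1/2)) (fun _ => 1)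
  | n + 1 => fun x => ∫ y in (-(1/2) : ℝ)..(1/2), bspline n (x - y)

lemma bspline_abs_le : ∀ (n : ℕ) (x : ℝ), |bspline n x| ≤ 1 := by
  intro n
  induction n with
  | zero =>
    intro x
    simp only [bspline, Set.indicator]
    split <;> simp
  | succ n ih =>
    intro x
    have h := intervalIntegral.norm_integral_le_of_norm_le_const (C := 1)
      (f := fun y => bspline n (x - y)) (a := (-(1/2):ℝ)) (b := (1/2:ℝ))
      (fun y _ => by simpa [Real.norm_eq_abs] using ih (x - y))
    simp only [bspline]
    rw [Real.norm_eq_abs] at h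
    calc |∫ y in (-(1/2) : ℝ)..(1/2), bspline n (x - y)| ≤ 1 * |(1/2 : ℝ) - -(1/2)| := h
      _ = 1 := by norm_num

lemma bspline_eq_zero : ∀ (n : ℕ) (x : ℝ), ((n : ℝ) + 1) / 2 ≤ |x| → bspline n x = 0 := by
  intro n
  induction n with
  | zero =>
    intro x hx
    simp only [bspline]
    apply Set.indicator_of_notMem
    intro hmem
    rw [Set.mem_Ioo] at hmem
    have : |x| < 1/2 := abs_lt.2 ⟨by linarith [hmem.1], hmem.2⟩
    norm_num at hx
    linarith
  | succ n ih =>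
    intro x hx
    simp only [bspline]
    rw [intervalIntegral.integral_congr (g := fun _ => (0:ℝ))]
    · simp
    · intro y hy
      rw [Set.uIcc_of_le (by norm_num : (-(1/2):ℝ) ≤ 1/2)] at hy
      apply ih
      have h1 : |y| ≤ 1/2 := abs_le.2 ⟨hy.1, hy.2⟩
      have h2 := abs_sub_abs_le_abs_sub x y
      push_cast at hx ⊢
      linarith

lemma bspline_measurable : ∀ n, Measurable (bspline n) := by
  intro n
  induction n with
  | zero => exact measurable_const.indicator measurableSet_Ioo
  | succ n ih =>
    have hii : ∀ a b : ℝ, IntervalIntegrable (bspline n) volume a b := fun a b =>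
      (intervalIntegrable_const (c := (1:ℝ))).mono_fun' ih.aestronglyMeasurable
        (Filter.Eventually.of_forall fun x => by
          simpa [Real.norm_eq_abs] using bspline_abs_le n x)
    have hcont : Continuous fun t => ∫ y in (0:ℝ)..t, bspline n y :=
      intervalIntegral.continuous_primitive hii 0
    have heq : bspline (n+1) = fun x =>
        (∫ y in (0:ℝ)..(x + 1/2), bspline n y) - ∫ y in (0:ℝ)..(x - 1/2), bspline n y := by
      funext x
      simp only [bspline]
      rw [intervalIntegral.integral_comp_sub_left (bspline n) x,
        intervalIntegral.integral_interval_sub_left (hii 0 (x + 1/2)) (hii 0 (x - 1/2))]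
      norm_num
    rw [heq]
    exact ((hcont.comp (continuous_id.add continuous_const)).sub
      (hcont.comp (continuous_id.sub continuous_const))).measurable

lemma bspline_sub_II (n : ℕ) (c a b : ℝ) :
    IntervalIntegrable (fun y => bspline n (c - y)) volume a b :=
  (intervalIntegrable_const (c := (1:ℝ))).mono_fun'
    (((bspline_measurable n).comp (measurable_const.sub measurable_id)).aestronglyMeasurable)
    (Filter.Eventually.of_forall fun y => by
      simpa [Real.norm_eq_abs] using bspline_abs_le n (c - y))

/-- the finset used everywhere -/
noncomputable def S (x : ℝ) (n : ℕ) : Finset ℤ := Finset.Icc (⌊x⌋ - (n + 3)) (⌊x⌋ + (n + 3))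

lemma not_mem_S {x : ℝ} {n : ℕ} {j : ℤ} (hj : j ∉ S x n) : (n : ℝ) + 3 < |x - j| := by
  rw [S, Finset.mem_Icc, not_and_or] at hj
  have hfl : |x - (⌊x⌋ : ℝ)| < 1 := by
    rw [abs_lt]
    constructor <;> linarith [Int.floor_le x, Int.lt_floor_add_one x]
  have hj' : ((n : ℝ) + 4) ≤ |(j : ℝ) - (⌊x⌋ : ℝ)| := by
    rcases hj with h | h
    · push_neg at h
      have : j + (n + 4) ≤ ⌊x⌋ := by omega
      have : (j : ℝ) + ((n : ℝ) + 4) ≤ (⌊x⌋ : ℝ) := by exact_mod_cast this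
      rw [abs_sub_comm, le_abs]
      left; linarith
    · push_neg at h
      have : ⌊x⌋ + (n + 4) ≤ j := by omega
      have : (⌊x⌋ : ℝ) + ((n : ℝ) + 4) ≤ (j : ℝ) := by exact_mod_cast this
      rw [le_abs]; left; linarith
  have := abs_sub_abs_le_abs_sub ((j:ℝ) - ⌊x⌋) (x - ⌊x⌋)
  have h3 : |(j:ℝ) - ⌊x⌋ - (x - ⌊x⌋)| = |x - j| := by
    rw [abs_sub_comm]; ring_nf
  have h4 : |(j:ℝ) - ⌊x⌋| - |x - (⌊x⌋:ℝ)| ≤ |x - j| := by rw [← h3]; exact this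
  linarith

lemma sum0 (t : ℝ) (h : ¬ ∃ k : ℤ, t = k + 1/2) {s : Finset ℤ} (hs : round t ∈ s) :
    ∑ j ∈ s, bspline 0 (t - j) = 1 := by
  have habs : |t - round t| < 1/2 := by
    rcases lt_or_eq_of_le (abs_sub_round t) with h' | h'
    · exact h'
    · exfalso
      rcases abs_eq (by norm_num : (0:ℝ) ≤ 1/2) |>.1 h' with h2 | h2
      · exact h ⟨round t, by linarith⟩
      · refine h ⟨round t - 1, ?_⟩
        push_cast
        linarith
  rw [Finset.sum_eq_single_of_mem (round t) hs]
  · simp only [bspline]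
    rw [Set.indicator_of_mem]
    rw [Set.mem_Ioo]
    constructor <;> [linarith [abs_lt.1 habs |>.1]; exact (abs_lt.1 habs).2]
  · intro j _ hjne
    simp only [bspline]
    apply Set.indicator_of_notMem
    rw [Set.mem_Ioo]
    have h1 : (1 : ℝ) ≤ |(j:ℝ) - round t| := by
      have h0 : (1:ℤ) ≤ |j - round t| := Int.one_le_abs (by omega)
      exact_mod_cast h0
    have h2 := abs_sub_abs_le_abs_sub ((j:ℝ) - round t) (t - round t)
    have h3 : |(j:ℝ) - round t - (t - round t)| = |t - j| := by
      rw [abs_sub_comm]; ring_nf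
    intro hmem
    have : |t - j| < 1/2 := abs_lt.2 ⟨by linarith [hmem.1], hmem.2⟩
    rw [h3] at h2
    linarith

/-- common step -/
lemma key (n : ℕ) (x : ℝ)
    (hinner : ∀ᵐ y ∂(volume : Measure ℝ), y ∈ Set.uIoc (-(1/2):ℝ) (1/2) →
      ∑ j ∈ S x n, bspline n (x - y - j) = 1) :
    ∑' j : ℤ, bspline (n+1) (x - j) = 1 := by
  have hout : ∀ j ∉ S x n, bspline (n+1) (x - j) = 0 := by
    intro j hj
    apply bspline_eq_zero
    have := not_mem_S hj
    push_cast
    linarith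
  rw [tsum_eq_sum hout]
  have hterm : ∀ j ∈ S x n, bspline (n+1) (x - j) =
      ∫ y in (-(1/2) : ℝ)..(1/2), bspline n (x - y - j) := by
    intro j _
    simp only [bspline]
    apply intervalIntegral.integral_congr
    intro y _
    ring_nf
  rw [Finset.sum_congr rfl hterm,
    ← intervalIntegral.integral_finset_sum (fun j _ => by
      have := bspline_sub_II n (x - j) (-(1/2):ℝ) (1/2)
      simpa [sub_right_comm] using this)]
  rw [intervalIntegral.integral_congr_ae (g := fun _ => (1:ℝ)) hinner]
  norm_num

/-- For `n ≥ 1`, the integer translates of the centered cardinal B-spline form a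
partition of unity. -/
theorem bspline_partition_of_unity (n : ℕ) (hn : 1 ≤ n) :
    ∀ x : ℝ, ∑' j : ℤ, bspline n (x - j) = 1 := by
  induction n, hn using Nat.le_induction with
  | base =>
    intro x
    apply key 0 x
    have hB : (volume : Measure ℝ) {y : ℝ | ∃ k : ℤ, x - y = k + 1/2} = 0 := by
      apply Set.Countable.measure_zero
      apply Set.Countable.mono (s₂ := Set.range (fun k : ℤ => x - (k + 1/2)))
      · intro y hy
        obtain ⟨k, hk⟩ := hy
        exact ⟨k, by linarith⟩
      · exact Set.countable_range _
    have hae : ∀ᵐ y ∂(volume : Measure ℝ), ¬ ∃ k : ℤ, x - y = k + 1/2 := by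
      rw [ae_iff]
      simpa using hB
    filter_upwards [hae] with y hy hmem
    apply sum0 (x - y) hy
    rw [Set.uIoc_of_le (by norm_num : (-(1/2):ℝ) ≤ 1/2), Set.mem_Ioc] at hmem
    have hy2 : |y| ≤ 1/2 := abs_le.2 ⟨le_of_lt hmem.1, hmem.2⟩
    have hr := abs_sub_round (x - y)
    have hfl1 := Int.floor_le x
    have hfl2 := Int.lt_floor_add_one x
    rw [S, Finset.mem_Icc]
    have h1 : |(round (x - y) : ℝ) - (⌊x⌋ : ℝ)| ≤ 2 := by
      have := abs_sub_abs_le_abs_sub (x - y) ((round (x-y):ℝ))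
      have hxy : |(round (x-y):ℝ) - ⌊x⌋| ≤ |(round (x-y):ℝ) - (x - y)| + |x - y - ⌊x⌋| := by
        calc |(round (x-y):ℝ) - ⌊x⌋| = |((round (x-y):ℝ) - (x-y)) + ((x - y) - ⌊x⌋)| := by ring_nf
          _ ≤ _ := abs_add_le _ _
      have h4 : |x - y - (⌊x⌋:ℝ)| ≤ 3/2 := by
        rw [abs_le]
        constructor <;> [linarith [abs_le.1 hy2]; linarith [abs_le.1 hy2]]
      rw [abs_sub_comm] at hr
      linarith
    have h2 : ((⌊x⌋ : ℝ) - 3) ≤ (round (x - y) : ℝ) ∧ (round (x-y):ℝ) ≤ (⌊x⌋:ℝ) + 3 := by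
      rcases abs_le.1 h1 with ⟨ha, hb⟩
      constructor <;> linarith
    constructor
    · have : (⌊x⌋ : ℝ) - (0 + 3) ≤ (round (x - y) : ℝ) := by linarith [h2.1]
      exact_mod_cast this
    · have : (round (x - y) : ℝ) ≤ (⌊x⌋ : ℝ) + (0 + 3) := by linarith [h2.2]
      exact_mod_cast this
  | succ n hn ih =>
    intro x
    apply key n x
    apply Filter.Eventually.of_forall
    intro y hy
    rw [Set.uIoc_of_le (by norm_num : (-(1/2):ℝ) ≤ 1/2), Set.mem_Ioc] at hy
    have hy2 : |y| ≤ 1/2 := abs_le.2 ⟨le_of_lt hy.1, hy.2⟩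
    rw [← tsum_eq_sum (s := S x n) (f := fun j : ℤ => bspline n (x - y - j)) (L := SummationFilter.unconditional ℤ)]
    · exact ih (x - y)
    · intro j hj
      apply bspline_eq_zero
      have h1 := not_mem_S (x := x) (n := n) hj
      have h2 : |x - j| - |y| ≤ |x - y - j| := by
        have := abs_sub_abs_le_abs_sub (x - j) y
        have h3 : x - j - y = x - y - j := by ring
        rwa [h3] at this
      linarith [abs_le.1 hy2]
end

section
/- Second-order interpolation accuracy of B-spline regularized delta functions: let n ∈ ℕ, let g : ℝ → ℝ be twice continuously differentiable with |g″(x)| ≤ M for all x ∈ ℝ, and let h > 0. Then for every y ∈ ℝ, |g(y) − ∫_ℝ (1/h) φ_n((x − y)/h) g(x) dx| ≤ (M/2) h² ∫_ℝ z² φ_n(z) dz; in particular the interpolation error is O(h²). -/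
open MeasureTheory Set

lemma bspline_nonneg (n : ℕ) : ∀ x, 0 ≤ bspline n x := by
  induction n with
  | zero =>
    intro x
    simp only [bspline]
    exact Set.indicator_nonneg (fun _ _ => zero_le_one) x
  | succ n ih =>
    intro x
    show 0 ≤ ∫ y in (-(1/2) : ℝ)..(1/2), bspline n (x - y)
    exact intervalIntegral.integral_nonneg (by norm_num) (fun u _ => ih _)

lemma bspline_succ (n : ℕ) (x : ℝ) :
    bspline (n+1) x = ∫ y, bspline 0 y * bspline n (x - y) := by
  have key : ∀ y : ℝ, bspline 0 y * bspline n (x - y)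
      = Set.indicator (Set.Ioo (-(1/2) : ℝ) (1/2)) (fun y => bspline n (x - y)) y := by
    intro y
    simp only [bspline, Set.indicator_apply]
    split_ifs <;> simp
  simp_rw [key]
  rw [MeasureTheory.integral_indicator measurableSet_Ioo,
    ← MeasureTheory.integral_Ioc_eq_integral_Ioo,
    ← intervalIntegral.integral_of_le (by norm_num : (-(1/2):ℝ) ≤ 1/2)]
  rfl

lemma bspline_zero_integrable : Integrable (bspline 0) (volume : Measure ℝ) := by
  have h : IntegrableOn (fun _ : ℝ => (1:ℝ)) (Set.Ioo (-(1/2):ℝ) (1/2)) volume :=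
    integrableOn_const measure_Ioo_lt_top.ne
  have := h.integrable_indicator measurableSet_Ioo
  simpa only [bspline] using this

lemma bspline_integrable (n : ℕ) : Integrable (bspline n) (volume : Measure ℝ) := by
  induction n with
  | zero => exact bspline_zero_integrable
  | succ n ih =>
    have e : bspline (n+1) = MeasureTheory.convolution (bspline 0) (bspline n)
        (ContinuousLinearMap.mul ℝ ℝ) volume := by
      funext x
      rw [bspline_succ]
      rfl
    rw [e]
    exact bspline_zero_integrable.integrable_convolution _ ih

lemma bspline_zero_integral : (∫ z, bspline 0 z) = 1 := by
  simp only [bspline]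
  rw [MeasureTheory.integral_indicator measurableSet_Ioo]
  simp [Real.volume_Ioo]
  norm_num

lemma bspline_integral (n : ℕ) : (∫ z, bspline n z) = 1 := by
  induction n with
  | zero => exact bspline_zero_integral
  | succ n ih =>
    have e : bspline (n+1) = MeasureTheory.convolution (bspline 0) (bspline n)
        (ContinuousLinearMap.mul ℝ ℝ) volume := by
      funext x; rw [bspline_succ]; rfl
    rw [e, MeasureTheory.integral_convolution _ bspline_zero_integrable (bspline_integrable n),
      bspline_zero_integral, ih]
    simp

lemma bspline_eq_zero_s9 (n : ℕ) (x : ℝ) (hx : (n + 1 : ℝ) / 2 ≤ |x|) : bspline n x = 0 := by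
  induction n generalizing x with
  | zero =>
    have hx' : (1:ℝ)/2 ≤ |x| := by push_cast at hx; linarith
    have hm : x ∉ Set.Ioo (-(1/2) : ℝ) (1/2) := by
      intro hm
      have : |x| < 1/2 := abs_lt.mpr ⟨by linarith [hm.1], hm.2⟩
      linarith
    simp only [bspline]
    exact Set.indicator_of_notMem hm _
  | succ n ih =>
    show (∫ y in (-(1/2) : ℝ)..(1/2), bspline n (x - y)) = 0
    rw [intervalIntegral.integral_congr (g := fun _ => (0:ℝ)) ?_, intervalIntegral.integral_const]
    · simp
    · intro y hy
      rw [Set.uIcc_of_le (by norm_num)] at hy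
      apply ih
      have h1 : |y| ≤ 1/2 := abs_le.mpr ⟨hy.1, hy.2⟩
      have h2 : |x| - |y| ≤ |x - y| := abs_sub_abs_le_abs_sub x y
      push_cast at hx ⊢
      linarith

lemma bspline_even (n : ℕ) : ∀ x, bspline n (-x) = bspline n x := by
  induction n with
  | zero =>
    intro x
    have hiff : (-x ∈ Set.Ioo (-(1/2) : ℝ) (1/2)) ↔ (x ∈ Set.Ioo (-(1/2) : ℝ) (1/2)) := by
      constructor
      · intro hm; exact ⟨by linarith [hm.2], by linarith [hm.1]⟩
      · intro hm; exact ⟨by linarith [hm.2], by linarith [hm.1]⟩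
    simp only [bspline, Set.indicator_apply, hiff]
  | succ n ih =>
    intro x
    show (∫ y in (-(1/2) : ℝ)..(1/2), bspline n (-x - y))
        = ∫ y in (-(1/2) : ℝ)..(1/2), bspline n (x - y)
    have e1 : ∀ y : ℝ, bspline n (-x - y) = bspline n (x + y) := by
      intro y
      have e : -x - y = -(x + y) := by ring
      rw [e, ih]
    simp_rw [e1]
    have key := intervalIntegral.integral_comp_neg (a := (-(1/2):ℝ)) (b := (1/2:ℝ))
      (f := fun y => bspline n (x - y))
    have e2 : -(-(1/2):ℝ) = 1/2 := by norm_num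
    rw [e2] at key
    simp only [sub_neg_eq_add] at key
    exact key

lemma taylor2_bound {g : ℝ → ℝ} {M : ℝ} (hg : ContDiff ℝ 2 g)
    (hM : ∀ x, |deriv (deriv g) x| ≤ M) (a s : ℝ) :
    |g (a + s) - g a - deriv g a * s| ≤ M / 2 * s ^ 2 := by
  have hM0 : 0 ≤ M := le_trans (abs_nonneg _) (hM 0)
  have hgd : Differentiable ℝ g := hg.differentiable (by norm_num)
  have hg2 : ContDiff ℝ (1 + 1) g := by
    have e : (1 + 1 : WithTop ℕ∞) = 2 := by norm_num
    rw [e]; exact hg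
  have hg' : ContDiff ℝ 1 (deriv g) := (contDiff_succ_iff_deriv.mp hg2).2.2
  have hd' : ∀ u : ℝ, DifferentiableAt ℝ (deriv g) u :=
    fun u => (hg'.differentiable one_ne_zero).differentiableAt
  have hlip : ∀ u v : ℝ, |deriv g u - deriv g v| ≤ M * |u - v| := by
    intro u v
    have := Convex.norm_image_sub_le_of_norm_deriv_le (f := deriv g) (C := M) (s := Set.univ)
      (fun x _ => hd' x) (fun x _ => by simpa [Real.norm_eq_abs] using hM x)
      convex_univ (Set.mem_univ v) (Set.mem_univ u)
    simpa [Real.norm_eq_abs] using this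
  set E : ℝ → ℝ := fun t => g (a + t) - g a - deriv g a * t with hE
  have hEd : ∀ t : ℝ, HasDerivAt E (deriv g (a + t) - deriv g a) t := by
    intro t
    have h1 : HasDerivAt (fun t : ℝ => g (a + t)) (deriv g (a + t)) t := by
      have := ((hgd (a + t)).hasDerivAt).comp t ((hasDerivAt_id t).const_add a)
      simpa [Function.comp_def] using this
    have h2 : HasDerivAt (fun t : ℝ => deriv g a * t) (deriv g a) t := by
      simpa using (hasDerivAt_id t).const_mul (deriv g a)
    exact (h1.sub_const (g a)).sub h2
  have hcont : Continuous fun t : ℝ => deriv g (a + t) - deriv g a :=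
    ((hg'.continuous).comp (continuous_const.add continuous_id)).sub continuous_const
  have key : E s = ∫ t in (0:ℝ)..s, (deriv g (a + t) - deriv g a) := by
    have h0 : E 0 = 0 := by simp [hE]
    have := intervalIntegral.integral_eq_sub_of_hasDerivAt (f := E) (a := 0) (b := s)
      (fun t _ => hEd t) (hcont.intervalIntegrable 0 s)
    rw [this, h0, sub_zero]
  have hbound : ∀ t : ℝ, ‖deriv g (a + t) - deriv g a‖ ≤ M * |t| := by
    intro t
    simpa [Real.norm_eq_abs] using hlip (a + t) a
  have habs : |E s| ≤ abs (∫ t in (0:ℝ)..s, M * |t|) := by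
    rw [key, ← Real.norm_eq_abs]
    exact intervalIntegral.norm_integral_le_abs_of_norm_le
      (Filter.Eventually.of_forall (fun t => hbound t))
      ((continuous_const.mul continuous_abs).intervalIntegrable 0 s)
  have hval : (∫ t in (0:ℝ)..s, M * |t|) = M * (s * |s|) / 2 := by
    rw [intervalIntegral.integral_const_mul]
    rcases le_or_gt 0 s with hs | hs
    · have : (∫ t in (0:ℝ)..s, |t|) = ∫ t in (0:ℝ)..s, t := by
        apply intervalIntegral.integral_congr
        intro t ht
        rw [Set.uIcc_of_le hs] at ht
        exact abs_of_nonneg ht.1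
      rw [this, integral_id, abs_of_nonneg hs]
      ring
    · have : (∫ t in (0:ℝ)..s, |t|) = ∫ t in (0:ℝ)..s, -t := by
        apply intervalIntegral.integral_congr
        intro t ht
        rw [Set.uIcc_of_ge hs.le] at ht
        exact abs_of_nonpos ht.2
      rw [this, intervalIntegral.integral_neg, integral_id, abs_of_neg hs]
      ring
  rw [hval] at habs
  calc |E s| ≤ |M * (s * |s|) / 2| := habs
    _ = M / 2 * s ^ 2 := by
        rw [abs_div, abs_mul, abs_mul, abs_abs, abs_of_nonneg hM0, abs_mul_abs_self]
        norm_num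
        ring

/-- Second-order interpolation accuracy of the B-spline regularized delta function
`δ_h(x) = (1/h) φ_n(x/h)`: for a `C²` function `g` with second derivative bounded by `M`,
the interpolation error at every point `y` is at most `(M/2) h² ∫ z² φ_n(z) dz`. -/
theorem bspline_interpolation_second_order (n : ℕ) (g : ℝ → ℝ) (M : ℝ)
    (hg : ContDiff ℝ 2 g) (hM : ∀ x : ℝ, |deriv (deriv g) x| ≤ M)
    (h : ℝ) (hh : 0 < h) :
    ∀ y : ℝ,
      |g y - ∫ x : ℝ, (1 / h) * bspline n ((x - y) / h) * g x| ≤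
        M / 2 * h ^ 2 * ∫ z : ℝ, z ^ 2 * bspline n z := by
  intro y
  have hM0 : 0 ≤ M := le_trans (abs_nonneg _) (hM 0)
  set φ : ℝ → ℝ := bspline n with hφ
  have hφ0 : ∀ z, 0 ≤ φ z := bspline_nonneg n
  have heven : ∀ z, φ (-z) = φ z := bspline_even n
  have hint : Integrable φ volume := bspline_integrable n
  have hI : (∫ z, φ z) = 1 := bspline_integral n
  set c : ℝ := ((n : ℝ) + 1) / 2 with hc
  have hc0 : 0 ≤ c := by positivity
  have hsupp : ∀ z : ℝ, c ≤ |z| → φ z = 0 := fun z hz => bspline_eq_zero_s9 n z hz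
  have hne : h ≠ 0 := ne_of_gt hh
  -- change of variables
  have hchg : (∫ x, (1 / h) * φ ((x - y) / h) * g x) = ∫ z, φ z * g (y + h * z) := by
    have e1 : (∫ x, (1 / h) * φ ((x - y) / h) * g x)
        = ∫ u, (1 / h) * φ (u / h) * g (u + y) := by
      rw [← MeasureTheory.integral_add_right_eq_self
        (fun x => (1 / h) * φ ((x - y) / h) * g x) y]
      simp [add_sub_cancel_right]
    have e2 : (∫ z, (1 / h) * φ ((h * z) / h) * g (h * z + y))
        = |h⁻¹| • ∫ u, (1 / h) * φ (u / h) * g (u + y) :=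
      MeasureTheory.Measure.integral_comp_mul_left (fun u => (1 / h) * φ (u / h) * g (u + y)) h
    have e3 : ∀ z : ℝ, (1 / h) * φ ((h * z) / h) * g (h * z + y)
        = (1 / h) * (φ z * g (y + h * z)) := by
      intro z
      rw [mul_div_cancel_left₀ _ hne, add_comm (h * z) y]
      ring
    simp_rw [e3] at e2
    rw [MeasureTheory.integral_const_mul] at e2
    rw [e1]
    have habs : |h⁻¹| = 1 / h := by rw [abs_of_pos (inv_pos.mpr hh), one_div]
    rw [habs, smul_eq_mul] at e2
    have hne' : (1 : ℝ) / h ≠ 0 := by positivity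
    exact (mul_left_cancel₀ hne' e2).symm
  set r : ℝ → ℝ := fun z => g (y + h * z) - g y - deriv g y * (h * z) with hr
  have htay : ∀ z, |r z| ≤ M / 2 * (h * z) ^ 2 := fun z => taylor2_bound hg hM y (h * z)
  have hrc : Continuous r := by
    apply Continuous.sub
    · exact (hg.continuous.comp (continuous_const.add (continuous_const.mul continuous_id))).sub
        continuous_const
    · exact continuous_const.mul (continuous_const.mul continuous_id)
  have haesm : AEStronglyMeasurable φ volume := hint.1
  have hG1m : AEStronglyMeasurable (fun z => φ z * r z) volume :=
    haesm.mul hrc.aestronglyMeasurable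
  have hbnd1 : ∀ z, ‖φ z * r z‖ ≤ (M / 2 * h ^ 2 * c ^ 2) * φ z := by
    intro z
    rcases le_or_gt c |z| with hz | hz
    · rw [hsupp z hz]; simp
    · rw [Real.norm_eq_abs, abs_mul, abs_of_nonneg (hφ0 z)]
      have h2 : z ^ 2 ≤ c ^ 2 :=
        sq_le_sq' (by linarith [(abs_lt.mp hz).1]) (by linarith [(abs_lt.mp hz).2])
      calc φ z * |r z| ≤ φ z * (M / 2 * (h * z) ^ 2) :=
            mul_le_mul_of_nonneg_left (htay z) (hφ0 z)
        _ ≤ M / 2 * h ^ 2 * c ^ 2 * φ z := by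
            nlinarith [mul_le_mul_of_nonneg_left
              (mul_le_mul_of_nonneg_left h2 (by positivity : (0:ℝ) ≤ M / 2 * h ^ 2)) (hφ0 z)]
  have iG1 : Integrable (fun z => φ z * r z) volume :=
    Integrable.mono' (hint.const_mul _) hG1m (Filter.Eventually.of_forall hbnd1)
  have idm : AEStronglyMeasurable (fun z : ℝ => z * φ z) volume :=
    aestronglyMeasurable_id.mul haesm
  have hbnd2 : ∀ z : ℝ, ‖z * φ z‖ ≤ c * φ z := by
    intro z
    rcases le_or_gt c |z| with hz | hz
    · rw [hsupp z hz]; simp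
    · rw [Real.norm_eq_abs, abs_mul, abs_of_nonneg (hφ0 z)]
      exact mul_le_mul_of_nonneg_right hz.le (hφ0 z)
  have i2 : Integrable (fun z : ℝ => z * φ z) volume :=
    Integrable.mono' (hint.const_mul _) idm (Filter.Eventually.of_forall hbnd2)
  have i0m : AEStronglyMeasurable (fun z : ℝ => z ^ 2 * φ z) volume :=
    (continuous_pow 2).aestronglyMeasurable.mul haesm
  have hbnd0 : ∀ z : ℝ, ‖z ^ 2 * φ z‖ ≤ c ^ 2 * φ z := by
    intro z
    rcases le_or_gt c |z| with hz | hz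
    · rw [hsupp z hz]; simp
    · rw [Real.norm_eq_abs, abs_mul, abs_of_nonneg (hφ0 z)]
      have h2 : z ^ 2 ≤ c ^ 2 :=
        sq_le_sq' (by linarith [(abs_lt.mp hz).1]) (by linarith [(abs_lt.mp hz).2])
      have : |z ^ 2| = z ^ 2 := abs_of_nonneg (sq_nonneg z)
      rw [this]
      exact mul_le_mul_of_nonneg_right h2 (hφ0 z)
  have i0 : Integrable (fun z : ℝ => z ^ 2 * φ z) volume :=
    Integrable.mono' (hint.const_mul _) i0m (Filter.Eventually.of_forall hbnd0)
  have hodd : (∫ z : ℝ, z * φ z) = 0 := by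
    have e := MeasureTheory.integral_neg_eq_self (fun z : ℝ => z * φ z) volume
    have e2 : ∀ z : ℝ, (-z) * φ (-z) = -(z * φ z) := by
      intro z
      rw [heven z]
      ring
    simp_rw [e2] at e
    rw [MeasureTheory.integral_neg] at e
    linarith
  have hsplit : (∫ z, φ z * g (y + h * z))
      = (∫ z, φ z * r z) + (deriv g y * h) * (∫ z, z * φ z) + g y * (∫ z, φ z) := by
    have e : (fun z => φ z * g (y + h * z))
        = fun z => (φ z * r z + (deriv g y * h) * (z * φ z)) + (g y) * φ z := by
      funext z
      simp only [hr]
      ring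
    have iA : Integrable (fun z => φ z * r z + (deriv g y * h) * (z * φ z)) volume :=
      iG1.add (i2.const_mul _)
    rw [e, MeasureTheory.integral_add iA (hint.const_mul _),
      MeasureTheory.integral_add iG1 (i2.const_mul _),
      MeasureTheory.integral_const_mul, MeasureTheory.integral_const_mul]
  rw [hchg, hsplit, hodd, hI]
  have e4 : g y - ((∫ z, φ z * r z) + deriv g y * h * 0 + g y * 1)
      = -(∫ z, φ z * r z) := by ring
  rw [e4, abs_neg]
  have hfinal : ∀ z, |φ z * r z| ≤ M / 2 * h ^ 2 * (z ^ 2 * φ z) := by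
    intro z
    rw [abs_mul, abs_of_nonneg (hφ0 z)]
    calc φ z * |r z| ≤ φ z * (M / 2 * (h * z) ^ 2) :=
          mul_le_mul_of_nonneg_left (htay z) (hφ0 z)
      _ = M / 2 * h ^ 2 * (z ^ 2 * φ z) := by ring
  calc |∫ z, φ z * r z| ≤ ∫ z, |φ z * r z| := by
        have := MeasureTheory.norm_integral_le_integral_norm (μ := volume) (fun z => φ z * r z)
        simpa only [Real.norm_eq_abs] using this
    _ ≤ ∫ z, M / 2 * h ^ 2 * (z ^ 2 * φ z) :=
        MeasureTheory.integral_mono iG1.abs (i0.const_mul _) hfinal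
    _ = M / 2 * h ^ 2 * ∫ z, z ^ 2 * φ z := MeasureTheory.integral_const_mul _ _
end

section
/- Composite B-spline interpolation of a discretely divergence-free MAC-grid velocity field is continuously divergence-free: let n ≥ 1 be a natural number, h > 0, and let u, v : ℤ × ℤ → ℝ be finitely supported data satisfying the discrete divergence-free condition (u_{i,j} − u_{i−1,j})/h + (v_{i,j} − v_{i,j−1})/h = 0 for all (i,j) ∈ ℤ². Define the composite B-spline interpolants U(x,y) = Σ_{i,j} u_{i,j} φ_{n+1}(x/h − i) φ_n(y/h − j + 1/2) and V(x,y) = Σ_{i,j} v_{i,j} φ_n(x/h − i + 1/2) φ_{n+1}(y/h − j). Then for every (x,y) ∈ ℝ², the partial derivatives ∂U/∂x and ∂V/∂y exist and ∂U/∂x (x,y) + ∂V/∂y (x,y) = 0. -/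
open MeasureTheory

lemma bspline_zero_ii (a b : ℝ) : IntervalIntegrable (bspline 0) volume a b := by
  apply Integrable.intervalIntegrable
  show Integrable (Set.indicator (Set.Ioo (-(1/2) : ℝ) (1/2)) (fun _ => 1)) volume
  rw [integrable_indicator_iff measurableSet_Ioo]
  exact integrableOn_const measure_Ioo_lt_top.ne

lemma bspline_eq_integral (n : ℕ) (x : ℝ) :
    bspline (n+1) x = ∫ t in (x - 1/2)..(x + 1/2), bspline n t := by
  show (∫ y in (-(1/2) : ℝ)..(1/2), bspline n (x - y)) = _
  rw [intervalIntegral.integral_comp_sub_left (bspline n) x]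
  norm_num

lemma bspline_aux : ∀ n : ℕ, (∀ a b : ℝ, IntervalIntegrable (bspline n) volume a b)
    ∧ (n ≠ 0 → Continuous (bspline n)) := by
  intro n
  induction n with
  | zero => exact ⟨bspline_zero_ii, fun hn => absurd rfl hn⟩
  | succ m ih =>
    have hint := ih.1
    have hcont : Continuous (bspline (m+1)) := by
      have heq : bspline (m+1) = fun x =>
          (∫ t in (0:ℝ)..(x+1/2), bspline m t) - ∫ t in (0:ℝ)..(x-1/2), bspline m t := by
        funext x
        rw [bspline_eq_integral]
        rw [intervalIntegral.integral_interval_sub_left (hint 0 (x+1/2)) (hint 0 (x-1/2))]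
      rw [heq]
      have hp := intervalIntegral.continuous_primitive hint 0
      exact (hp.comp (continuous_id.add continuous_const)).sub
        (hp.comp (continuous_id.sub continuous_const))
    exact ⟨fun a b => hcont.intervalIntegrable a b, fun _ => hcont⟩

lemma bspline_hasDerivAt (n : ℕ) (x : ℝ) :
    HasDerivAt (bspline (n+2)) (bspline (n+1) (x+1/2) - bspline (n+1) (x-1/2)) x := by
  have hc : Continuous (bspline (n+1)) := (bspline_aux (n+1)).2 (Nat.succ_ne_zero n)
  have hint := (bspline_aux (n+1)).1
  have key : ∀ c : ℝ, HasDerivAt (fun y : ℝ => ∫ t in (0:ℝ)..(y+c), bspline (n+1) t)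
      (bspline (n+1) (x+c)) x := by
    intro c
    have h0 := intervalIntegral.integral_hasDerivAt_right (hint 0 (x+c))
      (hc.stronglyMeasurable.stronglyMeasurableAtFilter) hc.continuousAt
    have h1 := h0.comp x ((hasDerivAt_id x).add_const c)
    rw [mul_one] at h1
    exact h1
  have heq : bspline (n+2) = fun y =>
      (∫ t in (0:ℝ)..(y+1/2), bspline (n+1) t) - ∫ t in (0:ℝ)..(y+(-(1/2))), bspline (n+1) t := by
    funext y
    rw [bspline_eq_integral]
    have hy : y + -(1/2) = y - 1/2 := by ring
    rw [hy, intervalIntegral.integral_interval_sub_left (hint 0 (y+1/2)) (hint 0 (y-1/2))]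
  rw [heq]
  have := (key (1/2)).sub (key (-(1/2)))
  rw [show x - 1/2 = x + -(1/2) by ring]
  exact this


lemma summable_aux {f : ℤ × ℤ → ℝ} {s : Set (ℤ × ℤ)} (hs : s.Finite)
    (h : ∀ p, p ∉ s → f p = 0) : Summable f :=
  summable_of_ne_finset_zero (s := hs.toFinset)
    (fun p hp => h p (fun hm => hp (hs.mem_toFinset.2 hm)))

lemma support_shift1 {w : ℤ × ℤ → ℝ} (hw : (Function.support w).Finite) :
    (Function.support (fun p : ℤ × ℤ => w (p.1 - 1, p.2))).Finite := by
  apply (hw.image (fun p : ℤ × ℤ => (p.1 + 1, p.2))).subset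
  intro p hp
  exact ⟨(p.1 - 1, p.2), hp, by simp⟩

lemma support_shift2 {w : ℤ × ℤ → ℝ} (hw : (Function.support w).Finite) :
    (Function.support (fun p : ℤ × ℤ => w (p.1, p.2 - 1))).Finite := by
  apply (hw.image (fun p : ℤ × ℤ => (p.1, p.2 + 1))).subset
  intro p hp
  exact ⟨(p.1, p.2 - 1), hp, by simp⟩

lemma shift_algebra1 (c : ℝ) (w : ℤ × ℤ → ℝ) (hw : (Function.support w).Finite)
    (A B : ℤ → ℝ) :
    ∑ p ∈ hw.toFinset, w p * ((A p.1 - A (p.1 + 1)) * c * B p.2)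
      = ∑' p : ℤ × ℤ, (w p - w (p.1 - 1, p.2)) * c * (A p.1 * B p.2) := by
  have s1 : Summable (fun p : ℤ × ℤ => w p * (A p.1 * B p.2 * c)) :=
    summable_aux hw (fun p hp => by
      rw [Function.notMem_support.1 hp, zero_mul])
  have s2 : Summable (fun p : ℤ × ℤ => w (p.1 - 1, p.2) * (A p.1 * B p.2 * c)) :=
    summable_aux (support_shift1 hw) (fun p hp => by
      rw [Function.notMem_support.1 hp, zero_mul])
  have step1 : ∑ p ∈ hw.toFinset, w p * ((A p.1 - A (p.1 + 1)) * c * B p.2)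
      = ∑' p : ℤ × ℤ, w p * ((A p.1 - A (p.1 + 1)) * c * B p.2) :=
    (tsum_eq_sum (fun p hp => by
      rw [Function.notMem_support.1 (fun hm => hp (hw.mem_toFinset.2 hm)), zero_mul])).symm
  rw [step1]
  have step2 : ∑' p : ℤ × ℤ, w p * ((A p.1 - A (p.1 + 1)) * c * B p.2)
      = (∑' p : ℤ × ℤ, w p * (A p.1 * B p.2 * c))
        - ∑' p : ℤ × ℤ, w p * (A (p.1 + 1) * B p.2 * c) := by
    rw [← Summable.tsum_sub s1 (by
      exact summable_aux hw (fun p hp => by rw [Function.notMem_support.1 hp, zero_mul]))]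
    exact tsum_congr (fun p => by ring)
  rw [step2]
  have step3 : ∑' p : ℤ × ℤ, w p * (A (p.1 + 1) * B p.2 * c)
      = ∑' p : ℤ × ℤ, w (p.1 - 1, p.2) * (A p.1 * B p.2 * c) := by
    rw [← Equiv.tsum_eq (Equiv.prodCongr (Equiv.addRight (1 : ℤ)) (Equiv.refl ℤ))
      (fun p : ℤ × ℤ => w (p.1 - 1, p.2) * (A p.1 * B p.2 * c))]
    exact tsum_congr (fun p => by
      simp [Equiv.prodCongr, Equiv.addRight])
  rw [step3, ← Summable.tsum_sub s1 s2]
  exact tsum_congr (fun p => by ring)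

lemma shift_algebra2 (c : ℝ) (w : ℤ × ℤ → ℝ) (hw : (Function.support w).Finite)
    (A B : ℤ → ℝ) :
    ∑ p ∈ hw.toFinset, w p * (A p.1 * ((B p.2 - B (p.2 + 1)) * c))
      = ∑' p : ℤ × ℤ, (w p - w (p.1, p.2 - 1)) * c * (A p.1 * B p.2) := by
  have s1 : Summable (fun p : ℤ × ℤ => w p * (A p.1 * B p.2 * c)) :=
    summable_aux hw (fun p hp => by rw [Function.notMem_support.1 hp, zero_mul])
  have s2 : Summable (fun p : ℤ × ℤ => w (p.1, p.2 - 1) * (A p.1 * B p.2 * c)) :=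
    summable_aux (support_shift2 hw) (fun p hp => by
      rw [Function.notMem_support.1 hp, zero_mul])
  have step1 : ∑ p ∈ hw.toFinset, w p * (A p.1 * ((B p.2 - B (p.2 + 1)) * c))
      = ∑' p : ℤ × ℤ, w p * (A p.1 * ((B p.2 - B (p.2 + 1)) * c)) :=
    (tsum_eq_sum (fun p hp => by
      rw [Function.notMem_support.1 (fun hm => hp (hw.mem_toFinset.2 hm)), zero_mul])).symm
  rw [step1]
  have step2 : ∑' p : ℤ × ℤ, w p * (A p.1 * ((B p.2 - B (p.2 + 1)) * c))
      = (∑' p : ℤ × ℤ, w p * (A p.1 * B p.2 * c))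
        - ∑' p : ℤ × ℤ, w p * (A p.1 * B (p.2 + 1) * c) := by
    rw [← Summable.tsum_sub s1 (by
      exact summable_aux hw (fun p hp => by rw [Function.notMem_support.1 hp, zero_mul]))]
    exact tsum_congr (fun p => by ring)
  rw [step2]
  have step3 : ∑' p : ℤ × ℤ, w p * (A p.1 * B (p.2 + 1) * c)
      = ∑' p : ℤ × ℤ, w (p.1, p.2 - 1) * (A p.1 * B p.2 * c) := by
    rw [← Equiv.tsum_eq (Equiv.prodCongr (Equiv.refl ℤ) (Equiv.addRight (1 : ℤ)))
      (fun p : ℤ × ℤ => w (p.1, p.2 - 1) * (A p.1 * B p.2 * c))]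
    exact tsum_congr (fun p => by
      simp [Equiv.prodCongr, Equiv.addRight])
  rw [step3, ← Summable.tsum_sub s1 s2]
  exact tsum_congr (fun p => by ring)


/-- Composite B-spline interpolation of a discretely divergence-free MAC-grid velocity
field is continuously divergence-free: the partial derivatives `∂U/∂x` and `∂V/∂y`
exist at every point and sum to zero. -/
theorem composite_bspline_divergence_free (n : ℕ) (hn : 1 ≤ n) (h : ℝ) (hh : 0 < h)
    (u v : ℤ × ℤ → ℝ) (hu : (Function.support u).Finite) (hv : (Function.support v).Finite)
    (hdiv : ∀ i j : ℤ, (u (i, j) - u (i - 1, j)) / h + (v (i, j) - v (i, j - 1)) / h = 0) :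
    ∀ x y : ℝ, ∃ a b : ℝ,
      HasDerivAt
        (fun t : ℝ => ∑' p : ℤ × ℤ,
          u p * (bspline (n + 1) (t / h - p.1) * bspline n (y / h - p.2 + 1/2))) a x ∧
      HasDerivAt
        (fun t : ℝ => ∑' p : ℤ × ℤ,
          v p * (bspline n (x / h - p.1 + 1/2) * bspline (n + 1) (t / h - p.2))) b y ∧
      a + b = 0 := by
  obtain ⟨m, rfl⟩ : ∃ m, n = m + 1 := ⟨n - 1, (Nat.succ_pred_eq_of_pos hn).symm⟩
  intro x y
  set A : ℤ → ℝ := fun i => bspline (m + 1) (x / h - i + 1/2) with hA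
  set B : ℤ → ℝ := fun j => bspline (m + 1) (y / h - j + 1/2) with hB
  -- derivative of each u-term
  have hterm_u : ∀ p : ℤ × ℤ,
      HasDerivAt (fun t : ℝ =>
          u p * (bspline (m + 1 + 1) (t / h - p.1) * bspline (m + 1) (y / h - p.2 + 1/2)))
        (u p * ((A p.1 - A (p.1 + 1)) * h⁻¹ * B p.2)) x := by
    intro p
    have hin : HasDerivAt (fun t : ℝ => t / h - (p.1 : ℝ)) h⁻¹ x := by
      simpa [div_eq_mul_inv] using (((hasDerivAt_id x).div_const h).sub_const (p.1 : ℝ))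
    have h2 := (bspline_hasDerivAt m (x / h - p.1)).comp x hin
    have h3 := (h2.mul_const (bspline (m + 1) (y / h - p.2 + 1/2))).const_mul (u p)
    have hA1 : A (p.1 + 1) = bspline (m + 1) (x / h - p.1 - 1/2) := by
      rw [hA]
      push_cast
      ring_nf
    have hA0 : A p.1 = bspline (m + 1) (x / h - p.1 + 1/2) := rfl
    rw [hA0, hA1]
    exact h3
  have hterm_v : ∀ p : ℤ × ℤ,
      HasDerivAt (fun t : ℝ =>
          v p * (bspline (m + 1) (x / h - p.1 + 1/2) * bspline (m + 1 + 1) (t / h - p.2)))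
        (v p * (A p.1 * ((B p.2 - B (p.2 + 1)) * h⁻¹))) y := by
    intro p
    have hin : HasDerivAt (fun t : ℝ => t / h - (p.2 : ℝ)) h⁻¹ y := by
      simpa [div_eq_mul_inv] using (((hasDerivAt_id y).div_const h).sub_const (p.2 : ℝ))
    have h2 := (bspline_hasDerivAt m (y / h - p.2)).comp y hin
    have h3 := (h2.const_mul (bspline (m + 1) (x / h - p.1 + 1/2))).const_mul (v p)
    have hB1 : B (p.2 + 1) = bspline (m + 1) (y / h - p.2 - 1/2) := by
      rw [hB]
      push_cast
      ring_nf
    have hB0 : B p.2 = bspline (m + 1) (y / h - p.2 + 1/2) := rfl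
    rw [hB0, hB1]
    exact h3
  have hU : HasDerivAt
      (fun t : ℝ => ∑' p : ℤ × ℤ,
        u p * (bspline (m + 1 + 1) (t / h - p.1) * bspline (m + 1) (y / h - p.2 + 1/2)))
      (∑ p ∈ hu.toFinset, u p * ((A p.1 - A (p.1 + 1)) * h⁻¹ * B p.2)) x := by
    have heq : (fun t : ℝ => ∑' p : ℤ × ℤ,
        u p * (bspline (m + 1 + 1) (t / h - p.1) * bspline (m + 1) (y / h - p.2 + 1/2)))
        = fun t : ℝ => ∑ p ∈ hu.toFinset,
          u p * (bspline (m + 1 + 1) (t / h - p.1) * bspline (m + 1) (y / h - p.2 + 1/2)) := by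
      funext t
      exact tsum_eq_sum (fun p hp => by
        rw [Function.notMem_support.1 (fun hm => hp (hu.mem_toFinset.2 hm)), zero_mul])
    rw [heq]
    exact HasDerivAt.fun_sum (fun p _ => hterm_u p)
  have hV : HasDerivAt
      (fun t : ℝ => ∑' p : ℤ × ℤ,
        v p * (bspline (m + 1) (x / h - p.1 + 1/2) * bspline (m + 1 + 1) (t / h - p.2)))
      (∑ p ∈ hv.toFinset, v p * (A p.1 * ((B p.2 - B (p.2 + 1)) * h⁻¹))) y := by
    have heq : (fun t : ℝ => ∑' p : ℤ × ℤ,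
        v p * (bspline (m + 1) (x / h - p.1 + 1/2) * bspline (m + 1 + 1) (t / h - p.2)))
        = fun t : ℝ => ∑ p ∈ hv.toFinset,
          v p * (bspline (m + 1) (x / h - p.1 + 1/2) * bspline (m + 1 + 1) (t / h - p.2)) := by
      funext t
      exact tsum_eq_sum (fun p hp => by
        rw [Function.notMem_support.1 (fun hm => hp (hv.mem_toFinset.2 hm)), zero_mul])
    rw [heq]
    exact HasDerivAt.fun_sum (fun p _ => hterm_v p)
  refine ⟨_, _, hU, hV, ?_⟩
  rw [shift_algebra1 h⁻¹ u hu A B, shift_algebra2 h⁻¹ v hv A B]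
  have s1 : Summable (fun p : ℤ × ℤ => (u p - u (p.1 - 1, p.2)) * h⁻¹ * (A p.1 * B p.2)) :=
    summable_aux (hu.union (support_shift1 hu)) (fun p hp => by
      simp only [Set.mem_union, Function.mem_support, not_or, not_not] at hp
      rw [hp.1, hp.2, sub_zero, zero_mul, zero_mul])
  have s2 : Summable (fun p : ℤ × ℤ => (v p - v (p.1, p.2 - 1)) * h⁻¹ * (A p.1 * B p.2)) :=
    summable_aux (hv.union (support_shift2 hv)) (fun p hp => by
      simp only [Set.mem_union, Function.mem_support, not_or, not_not] at hp
      rw [hp.1, hp.2, sub_zero, zero_mul, zero_mul])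
  rw [← Summable.tsum_add s1 s2]
  have key : ∀ p : ℤ × ℤ,
      (u p - u (p.1 - 1, p.2)) * h⁻¹ * (A p.1 * B p.2)
        + (v p - v (p.1, p.2 - 1)) * h⁻¹ * (A p.1 * B p.2) = 0 := by
    rintro ⟨i, j⟩
    have hd := hdiv i j
    have hne : h ≠ 0 := ne_of_gt hh
    have : (u (i, j) - u (i - 1, j)) * h⁻¹ * (A i * B j)
        + (v (i, j) - v (i, j - 1)) * h⁻¹ * (A i * B j)
        = ((u (i, j) - u (i - 1, j)) / h + (v (i, j) - v (i, j - 1)) / h) * (A i * B j) := by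
      ring
    rw [this, hd, zero_mul]
  calc (∑' p : ℤ × ℤ, ((u p - u (p.1 - 1, p.2)) * h⁻¹ * (A p.1 * B p.2)
        + (v p - v (p.1, p.2 - 1)) * h⁻¹ * (A p.1 * B p.2)))
      = ∑' _ : ℤ × ℤ, (0 : ℝ) := tsum_congr key
    _ = 0 := tsum_zero
end
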